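/- Let a₂, b₃ ∈ ℂ[x,y,z] be homogeneous polynomials of degrees 2 and 3, and define Φ : ℂ⁴ → ℂ⁴ by Φ(t,x,y,z) = (a₂tz, x·(a₂t+b₃), y·(a₂t+b₃), z·(a₂t+b₃)). Set Δ = t·(a₂t + b₃) ∈ ℂ[t,x,y,z] and Δ' = T·b₃(X,Y,Z) ∈ ℂ[T,X,Y,Z]. Then Δ'(Φ(t,x,y,z)) = a₂(x,y,z)·z·b₃(x,y,z)·(a₂t+b₃)²·Δ(t,x,y,z) identically in ℂ[t,x,y,z]. -/
import Mathlib


open MvPolynomial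


lemma aeval_scale {A : Type*} [CommRing A] [Algebra ℂ A]
    {p : MvPolynomial (Fin 3) ℂ} {n : ℕ} (hp : p.IsHomogeneous n) (v : Fin 3 → A) (s : A) :
    aeval (fun i => v i * s) p = s ^ n * aeval v p := by
  rw [aeval_def, aeval_def, eval₂_eq', eval₂_eq', Finset.mul_sum]
  refine Finset.sum_congr rfl fun d hd => ?_
  have hdeg : ∑ i, d i = n := by
    have := hp (mem_support_iff.mp hd)
    simpa [Finsupp.weight_apply, Finsupp.sum_fintype] using this
  have : ∏ i, (v i * s) ^ d i = (∏ i, v i ^ d i) * s ^ n := by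
    rw [← hdeg]
    simp [mul_pow, Finset.prod_mul_distrib, Finset.prod_pow_eq_pow_sum]
  rw [this]; ring


/-- For `a₂, b₃ ∈ ℂ[x,y,z]` homogeneous of degrees `2, 3`, the polynomial lift
`Φ(t,x,y,z) = (a₂tz, x(a₂t+b₃), y(a₂t+b₃), z(a₂t+b₃))` of the map (ix) satisfies
`Δ'(Φ) = a₂·z·b₃·(a₂t+b₃)²·Δ`, where `Δ = t(a₂t+b₃)` and `Δ' = T·b₃(X,Y,Z)`.
Variables: in `ℂ[t,x,y,z]` we use `t = X 0`, `x = X 1`, `y = X 2`, `z = X 3`;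
in `ℂ[x,y,z]` we use `x = X 0`, `y = X 1`, `z = X 2`. -/
theorem stmt_15 (a₂ b₃ : MvPolynomial (Fin 3) ℂ)
    (ha : a₂.IsHomogeneous 2) (hb : b₃.IsHomogeneous 3)
    (Δ Δ' : MvPolynomial (Fin 4) ℂ)
    (hΔ : Δ = X 0 * (aeval ![(X 1 : MvPolynomial (Fin 4) ℂ), X 2, X 3] a₂ * X 0
      + aeval ![(X 1 : MvPolynomial (Fin 4) ℂ), X 2, X 3] b₃))
    (hΔ' : Δ' = X 0 * aeval ![(X 1 : MvPolynomial (Fin 4) ℂ), X 2, X 3] b₃) :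
    aeval ![aeval ![(X 1 : MvPolynomial (Fin 4) ℂ), X 2, X 3] a₂ * X 0 * X 3,
        X 1 * (aeval ![(X 1 : MvPolynomial (Fin 4) ℂ), X 2, X 3] a₂ * X 0
          + aeval ![(X 1 : MvPolynomial (Fin 4) ℂ), X 2, X 3] b₃),
        X 2 * (aeval ![(X 1 : MvPolynomial (Fin 4) ℂ), X 2, X 3] a₂ * X 0
          + aeval ![(X 1 : MvPolynomial (Fin 4) ℂ), X 2, X 3] b₃),
        X 3 * (aeval ![(X 1 : MvPolynomial (Fin 4) ℂ), X 2, X 3] a₂ * X 0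
          + aeval ![(X 1 : MvPolynomial (Fin 4) ℂ), X 2, X 3] b₃)] Δ'
      = aeval ![(X 1 : MvPolynomial (Fin 4) ℂ), X 2, X 3] a₂ * X 3
        * aeval ![(X 1 : MvPolynomial (Fin 4) ℂ), X 2, X 3] b₃
        * (aeval ![(X 1 : MvPolynomial (Fin 4) ℂ), X 2, X 3] a₂ * X 0
          + aeval ![(X 1 : MvPolynomial (Fin 4) ℂ), X 2, X 3] b₃) ^ 2 * Δ := by
  subst hΔ hΔ'
  set w : Fin 3 → MvPolynomial (Fin 4) ℂ := ![X 1, X 2, X 3] with hw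
  set A := aeval w a₂ with hA
  set B := aeval w b₃ with hB
  set s : MvPolynomial (Fin 4) ℂ := A * X 0 + B with hs
  set Φ : Fin 4 → MvPolynomial (Fin 4) ℂ := ![A * X 0 * X 3, X 1 * s, X 2 * s, X 3 * s] with hΦ
  have key : aeval Φ B = s ^ 3 * B := by
    rw [hB, show (aeval w b₃ : MvPolynomial (Fin 4) ℂ) = bind₁ w b₃ from rfl, aeval_bind₁]
    have : (fun i => aeval Φ (w i)) = fun i => w i * s := by
      funext i
      fin_cases i <;> simp [hw, hΦ]
    rw [this, aeval_scale hb w s]; rfl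
  rw [map_mul, key]
  have h0 : aeval Φ (X 0 : MvPolynomial (Fin 4) ℂ) = A * X 0 * X 3 := by simp [hΦ]
  rw [h0]
  ring
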